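/- Let ρ, p be nonnegative measurable functions on a measurable set B ⊆ ℝ² of finite positive measure, with p = e^S ρ^γ pointwise for a measurable function S satisfying S ≥ S̄ (a constant), γ > 1, and suppose ∫_B ρ dx = m(0) + ρ̄|B| with m(0) ≥ -ρ̄|B|, ρ̄ > 0, p̄ = e^{S̄} ρ̄^γ. Then ∫_B (p - p̄) dx ≥ γ m(0) ρ̄^{γ-1} e^{S̄}. -/

import Mathlib

open MeasureTheory Real

theorem pressure_perturbation_lower_bound
    (B : Set (EuclideanSpace ℝ (Fin 2))) (hB : MeasurableSet B)
    (hBpos : 0 < (volume B).toReal) (hBfin : volume B ≠ ⊤)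
    (γ : ℝ) (hγ : 1 < γ)
    (ρ p S : EuclideanSpace ℝ (Fin 2) → ℝ)
    (hρmeas : Measurable ρ) (hSmeas : Measurable S)
    (hρnonneg : ∀ x ∈ B, 0 ≤ ρ x)
    (Sbar : ℝ) (hS : ∀ x ∈ B, Sbar ≤ S x)
    (hp : ∀ x ∈ B, p x = Real.exp (S x) * ρ x ^ γ)
    (hρint : IntegrableOn ρ B)
    (hργint : IntegrableOn (fun x => ρ x ^ γ) B)
    (hpint : IntegrableOn p B)
    (ρbar m0 : ℝ) (hρbar : 0 < ρbar)
    (hm0 : m0 = (∫ x in B, ρ x) - ρbar * (volume B).toReal)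
    (hm0' : -ρbar * (volume B).toReal ≤ m0)
    (pbar : ℝ) (hpbar : pbar = Real.exp Sbar * ρbar ^ γ) :
    γ * m0 * ρbar ^ (γ - 1) * Real.exp Sbar ≤ ∫ x in B, (p x - pbar) := by
  set V := (volume B).toReal with hV
  have hVpos : 0 < V := hBpos
  -- finite nonzero restricted measure
  haveI : IsFiniteMeasure (volume.restrict B) :=
    ⟨by rw [Measure.restrict_apply_univ]; exact hBfin.lt_top⟩
  haveI : NeZero (volume.restrict B) := by
    refine ⟨fun h => ?_⟩
    rw [Measure.restrict_eq_zero] at h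
    simp [hV, h] at hVpos
  -- Step 1: ∫ p ≥ e^{Sbar} ∫ ρ^γ
  have h1 : Real.exp Sbar * ∫ x in B, ρ x ^ γ ≤ ∫ x in B, p x := by
    rw [← MeasureTheory.integral_const_mul]
    refine setIntegral_mono_on (hργint.const_mul _) hpint hB ?_
    intro x hx
    rw [hp x hx]
    exact mul_le_mul_of_nonneg_right (Real.exp_le_exp.2 (hS x hx))
      (Real.rpow_nonneg (hρnonneg x hx) γ)
  -- Step 2: Jensen's inequality
  have hconv : ConvexOn ℝ (Set.Ici (0:ℝ)) fun x : ℝ => x ^ γ := convexOn_rpow hγ.le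
  have hcont : ContinuousOn (fun x : ℝ => x ^ γ) (Set.Ici 0) := by
    intro x hx
    exact (Real.continuousAt_rpow_const x γ (Or.inr (by linarith))).continuousWithinAt
  have hmem : ∀ᵐ x ∂volume.restrict B, ρ x ∈ Set.Ici (0:ℝ) :=
    ae_restrict_of_forall_mem hB hρnonneg
  have hjensen := hconv.map_average_le hcont isClosed_Ici hmem hρint hργint
  rw [average_eq, average_eq, measureReal_restrict_apply_univ, measureReal_def] at hjensen
  set I := ∫ x in B, ρ x with hI
  set J := ∫ x in B, ρ x ^ γ with hJ
  simp only [smul_eq_mul, ← hV] at hjensen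
  -- hjensen : (V⁻¹ * I) ^ γ ≤ V⁻¹ * J
  have hVa : 0 ≤ V⁻¹ * I := by
    have : 0 ≤ I := by
      have := hm0' ; nlinarith [hm0]
    positivity
  -- Bernoulli
  set s := m0 / (ρbar * V) with hs
  have hs1 : -1 ≤ s := by
    rw [hs, le_div_iff₀ (by positivity)]
    nlinarith
  have hbern : 1 + γ * s ≤ (1 + s) ^ γ := one_add_mul_self_le_rpow_one_add hs1 hγ.le
  have haeq : V⁻¹ * I = ρbar * (1 + s) := by
    rw [hs]
    have : I = m0 + ρbar * V := by rw [hm0]; ring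
    field_simp [this]
    linarith
  have hrpow : (V⁻¹ * I) ^ γ = ρbar ^ γ * (1 + s) ^ γ := by
    rw [haeq, Real.mul_rpow hρbar.le (by linarith)]
  -- combine: J ≥ V * ρbar^γ * (1 + γ s)
  have hJge : V * (ρbar ^ γ * (1 + γ * s)) ≤ J := by
    have h2 : ρbar ^ γ * (1 + γ * s) ≤ V⁻¹ * J := by
      calc ρbar ^ γ * (1 + γ * s) ≤ ρbar ^ γ * (1 + s) ^ γ := by
            have : (0:ℝ) ≤ ρbar ^ γ := Real.rpow_nonneg hρbar.le γ
            nlinarith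
        _ = (V⁻¹ * I) ^ γ := hrpow.symm
        _ ≤ V⁻¹ * J := hjensen
    calc V * (ρbar ^ γ * (1 + γ * s)) ≤ V * (V⁻¹ * J) := by nlinarith
      _ = J := by field_simp
  -- Step 3: assemble
  have hsub : ∫ x in B, (p x - pbar) = (∫ x in B, p x) - pbar * V := by
    rw [MeasureTheory.integral_sub hpint (integrableOn_const hBfin)]
    simp [hV, Measure.restrict_apply_univ, mul_comm, measureReal_def]
  rw [hsub, hpbar]
  have hkey : ρbar ^ (γ - 1) = ρbar ^ γ / ρbar := by
    rw [Real.rpow_sub hρbar, Real.rpow_one]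
  have hfin : γ * m0 * ρbar ^ (γ - 1) * Real.exp Sbar
      = Real.exp Sbar * (V * (ρbar ^ γ * (1 + γ * s))) - Real.exp Sbar * ρbar ^ γ * V := by
    rw [hkey, hs]
    field_simp
    ring
  rw [hfin]
  have hE : (0:ℝ) < Real.exp Sbar := Real.exp_pos _
  have : Real.exp Sbar * (V * (ρbar ^ γ * (1 + γ * s))) ≤ Real.exp Sbar * J := by
    nlinarith
  linarith [h1]
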